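/- Let z₁, z₂ ∈ ℍ, let z_λ ∈ ℍ, and define cd(z) = |z - z_λ|²/Im(z). Define Ψ(z₁,z₂) = -1/(z₁ + z₂ + λ) where λ ∈ ℝ satisfies z_λ = -1/(2z_λ + λ). Then with u_i = (z_i - z_λ)/√(Im z_i) and v = (√(y₁/(y₁+y₂)), √(y₂/(y₁+y₂))) (y_i = Im z_i), one has cd(Ψ(z₁,z₂)) = (1/2)·|z₁ + z₂ - 2z_λ|²/(y₁ + y₂) = (1/2)|⟨u, v⟩|², where ⟨u,v⟩ = u₁v₁ + u₂v₂. -/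

import Mathlib

/-- The key identity for the weight function cd(z) = |z - z_λ|²/Im z under the
tree recursion Ψ(z₁,z₂) = -1/(z₁+z₂+λ), where z_λ ∈ ℍ is the fixed point of
z ↦ -1/(2z+λ): cd(Ψ(z₁,z₂)) = (1/2)|z₁+z₂-2z_λ|²/(y₁+y₂) = (1/2)|⟨u,v⟩|². -/
theorem cd_recursion_identity (l : ℝ) (zl z₁ z₂ : ℂ) (hzl : 0 < zl.im)
    (hfix : zl = -1 / (2 * zl + (l : ℂ)))
    (h1 : 0 < z₁.im) (h2 : 0 < z₂.im) :
    ‖(-1 / (z₁ + z₂ + (l : ℂ)) - zl)‖ ^ 2 / (-1 / (z₁ + z₂ + (l : ℂ))).im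
      = (1 / 2) * ‖(z₁ + z₂ - 2 * zl)‖ ^ 2 / (z₁.im + z₂.im) ∧
    (1 / 2) * ‖(z₁ + z₂ - 2 * zl)‖ ^ 2 / (z₁.im + z₂.im)
      = (1 / 2) * ‖
          ((z₁ - zl) / (Real.sqrt z₁.im : ℂ) * (Real.sqrt (z₁.im / (z₁.im + z₂.im)) : ℂ)
            + (z₂ - zl) / (Real.sqrt z₂.im : ℂ) * (Real.sqrt (z₂.im / (z₁.im + z₂.im)) : ℂ))‖ ^ 2 := by
  set w : ℂ := z₁ + z₂ + (l : ℂ) with hw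
  have hwim : w.im = z₁.im + z₂.im := by simp [hw]
  have hY : 0 < z₁.im + z₂.im := by linarith
  have hwne : w ≠ 0 := fun h => by rw [h] at hwim; simp at hwim; linarith
  have hdne : (2 * zl + (l : ℂ)) ≠ 0 := by
    intro h
    have := congrArg Complex.im h
    simp at this
    linarith
  have heq : 2 * zl ^ 2 + (l : ℂ) * zl + 1 = 0 := by
    have := hfix
    rw [eq_div_iff hdne] at this
    linear_combination this
  have hnsq : Complex.normSq zl = 1 / 2 := by
    have him := congrArg Complex.im heq
    have hre := congrArg Complex.re heq
    simp [Complex.add_im, Complex.add_re, Complex.mul_im, Complex.mul_re, pow_two] at him hre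
    have h4 : zl.im * (4 * zl.re + l) = 0 := by linear_combination him
    have hx : 4 * zl.re + l = 0 := by
      rcases mul_eq_zero.1 h4 with h | h
      · exact absurd h hzl.ne'
      · exact h
    have hlx : l * zl.re = -(4 * zl.re * zl.re) := by linear_combination zl.re * hx
    rw [Complex.normSq_apply]
    nlinarith [hre, hlx]
  have key : -1 / w - zl = -zl * (z₁ + z₂ - 2 * zl) / w := by
    field_simp
    linear_combination -heq
  constructor
  · rw [key]
    have habs : ‖(-zl * (z₁ + z₂ - 2 * zl) / w)‖ ^ 2
        = Complex.normSq zl * ‖(z₁ + z₂ - 2 * zl)‖ ^ 2 / Complex.normSq w := by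
      rw [norm_div, norm_mul, div_pow, mul_pow, norm_neg,
        Complex.sq_norm, Complex.sq_norm, Complex.sq_norm]
    have him : (-1 / w).im = w.im / Complex.normSq w := by
      rw [Complex.div_im]
      simp
      ring
    rw [habs, him, hnsq, hwim]
    have hnsqw : Complex.normSq w ≠ 0 := (Complex.normSq_pos.mpr hwne).ne'
    field_simp
  · have hsum : (z₁ - zl) / (Real.sqrt z₁.im : ℂ) * (Real.sqrt (z₁.im / (z₁.im + z₂.im)) : ℂ)
        + (z₂ - zl) / (Real.sqrt z₂.im : ℂ) * (Real.sqrt (z₂.im / (z₁.im + z₂.im)) : ℂ)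
        = (z₁ + z₂ - 2 * zl) / (Real.sqrt (z₁.im + z₂.im) : ℂ) := by
      rw [Real.sqrt_div h1.le, Real.sqrt_div h2.le]
      have e1 : (Real.sqrt z₁.im : ℂ) ≠ 0 := by
        exact_mod_cast Real.sqrt_ne_zero'.2 h1
      have e2 : (Real.sqrt z₂.im : ℂ) ≠ 0 := by
        exact_mod_cast Real.sqrt_ne_zero'.2 h2
      have eY : (Real.sqrt (z₁.im + z₂.im) : ℂ) ≠ 0 := by
        exact_mod_cast Real.sqrt_ne_zero'.2 hY
      push_cast
      field_simp
      ring
    rw [hsum, norm_div, div_pow, Complex.norm_real, Real.norm_eq_abs,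
      abs_of_nonneg (Real.sqrt_nonneg _), Real.sq_sqrt hY.le]
    ring
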